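/- Define M(a;b) := a·b² + 3·∑_{ν=1}^{2b−1} ⌊aν/(2b)⌋·(b−ν) + 3·∑_{ν=1}^{b−1} (⌊2aν/b⌋ − 2⌊aν/b⌋)·(b−2ν). Then for coprime positive integers a, b with a+b odd, b·Q(a;b) = a(1−3b)/2 + M(a;b), where Q(a;b) := 6·(s(a;2b) + s(2a;b) − 2·s(a;b)). -/

import Mathlib

open Finset Real

/-- The classical Dedekind sum `s(a;b)` defined by the cotangent sum. -/
noncomputable def dedekindS (a : ℤ) (b : ℕ) : ℝ :=
  (1 / (4 * (b : ℝ))) * ∑ ν ∈ Finset.Ico 1 b,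
    Real.cot (Real.pi * a * ν / b) * Real.cot (Real.pi * ν / b)

/-- The rational part `Q(a;b)` of the elliptic classical Dedekind sum. -/
noncomputable def Qpart (a b : ℕ) : ℝ :=
  6 * (dedekindS a (2 * b) + dedekindS (2 * a) b - 2 * dedekindS a b)

/-- The integral part `M(a;b)`. -/
def Mpart (a b : ℕ) : ℤ :=
  (a : ℤ) * (b : ℤ) ^ 2
    + 3 * ∑ ν ∈ Finset.Ico 1 (2 * b), ((a * ν / (2 * b) : ℕ) : ℤ) * ((b : ℤ) - (ν : ℤ))
    + 3 * ∑ ν ∈ Finset.Ico 1 b,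
        (((2 * a * ν / b : ℕ) : ℤ) - 2 * ((a * ν / b : ℕ) : ℤ)) * ((b : ℤ) - 2 * (ν : ℤ))

/-! ### Auxiliary trigonometric lemmas -/

lemma cot_add_int_mul_pi' (x : ℝ) (n : ℤ) : Real.cot (x + n*π) = Real.cot x := by
  rw [Real.cot_eq_cos_div_sin, Real.cot_eq_cos_div_sin, Real.cos_add_int_mul_pi,
    Real.sin_add_int_mul_pi, mul_div_mul_left _ _ (by positivity : ((-1:ℝ))^n ≠ 0)]

lemma cot_int_mul_pi' (n : ℤ) : Real.cot (n * π) = 0 := by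
  rw [Real.cot_eq_cos_div_sin, Real.sin_int_mul_pi, div_zero]

lemma cot_pi_sub' (x : ℝ) : Real.cot (π - x) = -Real.cot x := by
  rw [Real.cot_eq_cos_div_sin, Real.cot_eq_cos_div_sin, Real.cos_pi_sub, Real.sin_pi_sub, neg_div]

lemma sum_cos_eq (c : ℕ) (hc : 0 < c) (j : ℤ) :
    ∑ ν ∈ range c, Real.cos (2 * π * j * ν / c) = if (c:ℤ) ∣ j then (c:ℝ) else 0 := by
  have hc0 : (c:ℝ) ≠ 0 := Nat.cast_ne_zero.2 hc.ne'
  by_cases h : (c:ℤ) ∣ j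
  · obtain ⟨m, rfl⟩ := h
    rw [if_pos ⟨m, rfl⟩]
    have key : ∀ ν ∈ range c, Real.cos (2 * π * (((c:ℤ)*m : ℤ) : ℝ) * ν / c) = 1 := by
      intro ν _
      have harg : 2 * π * (((c:ℤ)*m : ℤ):ℝ) * ν / c = ((m*ν : ℤ):ℝ) * (2*π) := by
        push_cast; field_simp
      rw [harg, Real.cos_int_mul_two_pi]
    rw [Finset.sum_congr rfl key, Finset.sum_const, card_range, nsmul_eq_mul, mul_one]
  · rw [if_neg h]
    have hcC : (c:ℂ) ≠ 0 := by exact_mod_cast hc0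
    set z : ℂ := Complex.exp ((2*π*j/c : ℝ) * Complex.I) with hz
    have key : ∀ ν ∈ range c, Real.cos (2 * π * j * ν / c) = (z ^ ν).re := by
      intro ν _
      rw [hz, ← Complex.exp_nat_mul]
      have : (ν:ℂ) * (((2*π*j/c : ℝ):ℂ) * Complex.I) = ((2*π*j*ν/c : ℝ):ℂ) * Complex.I := by
        push_cast; ring
      rw [this, Complex.exp_ofReal_mul_I_re]
    rw [Finset.sum_congr rfl key, ← Complex.re_sum]
    have hzc : z ^ c = 1 := by
      rw [hz, ← Complex.exp_nat_mul]
      have : (c:ℂ) * (((2*π*j/c : ℝ):ℂ) * Complex.I) = (j:ℂ) * (2*(π:ℂ)*Complex.I) := by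
        push_cast
        linear_combination (2*(π:ℂ)*(j:ℂ)*Complex.I) * mul_inv_cancel₀ hcC
      rw [this, Complex.exp_int_mul_two_pi_mul_I]
    have hz1 : z ≠ 1 := by
      intro hzz
      rw [hz, Complex.exp_eq_one_iff] at hzz
      obtain ⟨n, hn⟩ := hzz
      apply h
      have him : (2*π*(j:ℝ)/c) = (n:ℝ)*(2*π) := by
        have := congrArg Complex.im hn
        simpa using this
      have h2 : (j:ℝ) = (n:ℝ)*c := by
        field_simp at him
        have h2π : (2*π:ℝ) ≠ 0 := by positivity
        apply mul_left_cancel₀ h2π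
        linear_combination (2*π) * him
      have h3 : (j:ℝ) = (c:ℝ)*n := h2.trans (mul_comm _ _)
      exact ⟨n, by exact_mod_cast h3⟩
    rw [geom_sum_eq hz1, hzc, sub_self, zero_div, Complex.zero_re]

lemma sin_odd_mul (θ : ℝ) (n : ℕ) :
    Real.sin ((2*n+1)*θ) = Real.sin θ * (1 + 2 * ∑ j ∈ range n, Real.cos (2*(j+1)*θ)) := by
  induction n with
  | zero => simp
  | succ n ih =>
    rw [Finset.sum_range_succ]
    have h := Real.sin_sub_sin ((2*(n+1:ℕ)+1)*θ) ((2*n+1)*θ)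
    rw [show ((2*(n+1:ℕ)+1)*θ - (2*(n:ℕ)+1)*θ)/2 = θ by push_cast; ring,
        show ((2*(n+1:ℕ)+1)*θ + (2*(n:ℕ)+1)*θ)/2 = 2*((n:ℕ)+1)*θ by push_cast; ring] at h
    have h2 : Real.sin ((2*(n+1:ℕ)+1)*θ)
        = Real.sin ((2*(n:ℕ)+1)*θ) + 2 * Real.sin θ * Real.cos (2*((n:ℕ)+1)*θ) := by
      linarith [h]
    rw [h2, ih]
    push_cast
    ring

lemma cot_mul_sin (θ : ℝ) (hθ : Real.sin θ ≠ 0) (n : ℕ) (hn : 1 ≤ n) :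
    Real.cot θ * Real.sin (2*n*θ)
      = 1 + 2 * ∑ j ∈ range (n-1), Real.cos (2*(j+1)*θ) + Real.cos (2*n*θ) := by
  obtain ⟨m, rfl⟩ : ∃ m, n = m + 1 := ⟨n-1, (Nat.succ_pred_eq_of_pos hn).symm⟩
  have hsum : Real.sin ((2*(m+1:ℕ)+1)*θ) + Real.sin ((2*(m:ℕ)+1)*θ)
      = 2 * Real.sin (2*(m+1:ℕ)*θ) * Real.cos θ := by
    rw [show ((2*(m+1:ℕ)+1):ℝ)*θ = 2*((m:ℕ)+1)*θ + θ by push_cast; ring,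
        show ((2*(m:ℕ)+1):ℝ)*θ = 2*((m:ℕ)+1)*θ - θ by push_cast; ring,
        show ((2:ℝ)*(m+1:ℕ)*θ) = 2*((m:ℕ)+1)*θ by push_cast; ring,
        Real.sin_add, Real.sin_sub]
    ring
  rw [Real.cot_eq_cos_div_sin, div_mul_eq_mul_div, div_eq_iff hθ, Nat.add_sub_cancel]
  have h1 := sin_odd_mul θ (m+1)
  have h2 := sin_odd_mul θ m
  rw [Finset.sum_range_succ] at h1
  push_cast at h1 h2 hsum ⊢
  linear_combination (1/2) * h1 + (1/2) * h2 - (1/2) * hsum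

lemma sin_pik_ne (c k : ℕ) (h1 : 1 ≤ k) (h2 : k < c) : Real.sin (π*k/c) ≠ 0 := by
  have hc : (0:ℝ) < c := by exact_mod_cast (by omega : 0 < c)
  have hk : (0:ℝ) < k := by exact_mod_cast h1
  have hkc : (k:ℝ) < c := by exact_mod_cast h2
  apply ne_of_gt
  apply Real.sin_pos_of_pos_of_lt_pi
  · positivity
  · rw [div_lt_iff₀ hc]
    nlinarith [Real.pi_pos]

lemma sum_cos_Ico (c m : ℕ) (hm1 : 0 < m) (hm2 : m < c) :
    ∑ k ∈ Ico 1 c, Real.cos (2*π*m*k/c) = -1 := by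
  have hc : 0 < c := lt_trans hm1 hm2
  have h := sum_cos_eq c hc m
  rw [if_neg (fun hdvd => by have := Int.le_of_dvd (by exact_mod_cast hm1) hdvd; omega)] at h
  rw [Finset.range_eq_Ico, Finset.sum_eq_sum_Ico_succ_bot hc] at h
  simp only [Nat.cast_zero, mul_zero, zero_div, Real.cos_zero, Nat.cast_ofNat] at h
  have harg : ∀ k:ℕ, 2*π*(m:ℝ)*k/c = 2*π*((m:ℤ):ℝ)*k/c := by intro k; norm_num
  rw [show (0:ℕ)+1 = 1 from rfl] at h
  calc ∑ k ∈ Ico 1 c, Real.cos (2*π*(m:ℝ)*k/c)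
      = ∑ k ∈ Ico 1 c, Real.cos (2*π*((m:ℤ):ℝ)*k/c) := by
        apply Finset.sum_congr rfl; intro k _; rw [harg]
    _ = -1 := by linarith [h]

lemma sum_cot_sin (c r : ℕ) (hr1 : 1 ≤ r) (hr2 : r < c) :
    ∑ k ∈ Ico 1 c, Real.cot (π*k/c) * Real.sin (2*π*k*r/c) = (c:ℝ) - 2*r := by
  have hc : 0 < c := by omega
  have step : ∀ k ∈ Ico 1 c, Real.cot (π*k/c) * Real.sin (2*π*k*r/c)
      = 1 + 2 * ∑ j ∈ range (r-1), Real.cos (2*π*(j+1)*k/c) + Real.cos (2*π*r*k/c) := by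
    intro k hk
    rw [Finset.mem_Ico] at hk
    have hθ := sin_pik_ne c k hk.1 hk.2
    have h := cot_mul_sin (π*k/c) hθ r hr1
    rw [show (2:ℝ)*r*(π*k/c) = 2*π*k*r/c by ring] at h
    rw [h]
    congr 1
    · congr 1
      congr 1
      apply Finset.sum_congr rfl
      intro j _
      congr 1
      ring
    · congr 1
      ring
  rw [Finset.sum_congr rfl step]
  rw [Finset.sum_add_distrib, Finset.sum_add_distrib, Finset.sum_const, Nat.card_Ico]
  have hmid : ∑ x ∈ Ico 1 c, 2 * ∑ j ∈ range (r - 1), Real.cos (2*π*(j+1)*x/c)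
      = 2 * ∑ j ∈ range (r-1), ∑ x ∈ Ico 1 c, Real.cos (2*π*(j+1)*x/c) := by
    rw [← Finset.mul_sum, Finset.sum_comm]
  have hinner : ∀ j ∈ range (r-1), ∑ x ∈ Ico 1 c, Real.cos (2*π*(j+1)*x/c) = -1 := by
    intro j hj
    rw [Finset.mem_range] at hj
    have := sum_cos_Ico c (j+1) (by omega) (by omega)
    calc ∑ x ∈ Ico 1 c, Real.cos (2*π*((j:ℝ)+1)*x/c)
        = ∑ x ∈ Ico 1 c, Real.cos (2*π*((j+1:ℕ):ℝ)*x/c) := by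
          apply Finset.sum_congr rfl; intro x _; norm_num
      _ = -1 := this
  rw [hmid, Finset.sum_congr rfl hinner, Finset.sum_const, card_range,
      sum_cos_Ico c r hr1 hr2]
  have h1 : (1:ℕ) ≤ c := hc
  simp only [nsmul_eq_mul, mul_one, mul_neg_one]
  rw [Nat.cast_sub h1, Nat.cast_sub hr1]
  push_cast
  ring

/-! ### The sawtooth function and its finite Fourier expansion -/

noncomputable def Bval (m c : ℕ) : ℝ := if c ∣ m then 0 else ((m % c : ℕ):ℝ)/c - 1/2

lemma saw_fourier (c : ℕ) (hc : 0 < c) (m : ℕ) :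
    Bval m c = -(1/(2*c)) * ∑ k ∈ Ico 1 c, Real.cot (π*k/c) * Real.sin (2*π*k*m/c) := by
  have hc0 : (c:ℝ) ≠ 0 := Nat.cast_ne_zero.2 hc.ne'
  obtain ⟨q, r, hrc, hm⟩ : ∃ q r, r < c ∧ m = c * q + r :=
    ⟨m / c, m % c, Nat.mod_lt m hc, (Nat.div_add_mod m c).symm⟩
  subst hm
  have hmod : (c * q + r) % c = r := by rw [Nat.mul_add_mod, Nat.mod_eq_of_lt hrc]
  have hper : ∀ k : ℕ, Real.sin (2*π*k*((c*q+r:ℕ):ℝ)/c) = Real.sin (2*π*k*(r:ℝ)/c) := by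
    intro k
    rw [show 2*π*(k:ℝ)*((c*q+r:ℕ):ℝ)/c = 2*π*k*(r:ℝ)/c + ((k*q:ℕ):ℤ)*(2*π) by
      push_cast; field_simp; ring]
    rw [Real.sin_add_int_mul_two_pi]
  simp_rw [hper]
  by_cases hd : c ∣ c*q + r
  · have hr0 : r = 0 := by
      have : c ∣ r := (Nat.dvd_add_right ⟨q, rfl⟩).mp hd
      omega
    subst hr0
    rw [Bval, if_pos hd]
    have : ∀ k ∈ Ico 1 c, Real.cot (π*k/c) * Real.sin (2*π*k*((0:ℕ):ℝ)/c) = 0 := by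
      intro k _; norm_num
    rw [Finset.sum_congr rfl this, Finset.sum_const_zero, mul_zero]
  · rw [Bval, if_neg hd, hmod]
    have hr1 : 1 ≤ r := by
      rcases Nat.eq_zero_or_pos r with h | h
      · exact absurd (h ▸ ⟨q, by omega⟩) hd
      · exact h
    rw [sum_cot_sin c r hr1 hrc]
    field_simp
    ring

lemma sum_sin_sin (c : ℕ) (hc : 0 < c) (k l : ℕ) :
    ∑ ν ∈ range c, Real.sin (2*π*k*ν/c) * Real.sin (2*π*l*ν/c)
      = ((if (c:ℤ) ∣ (k:ℤ)-l then (c:ℝ) else 0) - (if (c:ℤ) ∣ (k:ℤ)+l then (c:ℝ) else 0))/2 := by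
  have hptwise : ∀ ν ∈ range c, Real.sin (2*π*k*ν/c) * Real.sin (2*π*l*ν/c)
      = (Real.cos (2*π*(((k:ℤ)-l : ℤ):ℝ)*ν/c) - Real.cos (2*π*(((k:ℤ)+l : ℤ):ℝ)*ν/c))/2 := by
    intro ν _
    have h := Real.cos_sub_cos (2*π*(((k:ℤ)-l : ℤ):ℝ)*ν/c) (2*π*(((k:ℤ)+l : ℤ):ℝ)*ν/c)
    rw [show (2*π*(((k:ℤ)-l : ℤ):ℝ)*ν/c + 2*π*(((k:ℤ)+l : ℤ):ℝ)*ν/c)/2 = 2*π*k*ν/c by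
          push_cast; ring,
        show (2*π*(((k:ℤ)-l : ℤ):ℝ)*ν/c - 2*π*(((k:ℤ)+l : ℤ):ℝ)*ν/c)/2 = -(2*π*l*ν/c) by
          push_cast; ring,
        Real.sin_neg] at h
    linarith [h]
  rw [Finset.sum_congr rfl hptwise, ← Finset.sum_div, Finset.sum_sub_distrib,
      sum_cos_eq c hc ((k:ℤ)-l), sum_cos_eq c hc ((k:ℤ)+l)]

lemma key_l (c : ℕ) (hc : 0 < c) (m : ℕ) :
    ∑ l ∈ Ico 1 c, Real.cot (π*l/c) *
      (((if (c:ℤ) ∣ (m:ℤ)-l then (c:ℝ) else 0) - (if (c:ℤ) ∣ (m:ℤ)+l then (c:ℝ) else 0))/2)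
    = c * Real.cot (π*m/c) := by
  have hc0 : (c:ℝ) ≠ 0 := Nat.cast_ne_zero.2 hc.ne'
  obtain ⟨q, ρ, hrc, hm⟩ : ∃ q ρ, ρ < c ∧ m = c * q + ρ :=
    ⟨m / c, m % c, Nat.mod_lt m hc, (Nat.div_add_mod m c).symm⟩
  subst hm
  rcases Nat.eq_zero_or_pos ρ with hρ0 | hρ1
  · subst hρ0
    have hz : ∀ l ∈ Ico 1 c, Real.cot (π*l/c) *
        (((if (c:ℤ) ∣ ((c*q+0:ℕ):ℤ)-l then (c:ℝ) else 0)
          - (if (c:ℤ) ∣ ((c*q+0:ℕ):ℤ)+l then (c:ℝ) else 0))/2) = 0 := by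
      intro l hl
      rw [Finset.mem_Ico] at hl
      have hlc : (l:ℤ) < c := by exact_mod_cast hl.2
      have hl1 : (0:ℤ) < l := by exact_mod_cast hl.1
      have hcq : (c:ℤ) ∣ ((c*q+0:ℕ):ℤ) := by push_cast; exact ⟨q, by ring⟩
      rw [if_neg, if_neg]
      · norm_num
      · intro hdvd
        have h1 : (c:ℤ) ∣ (l:ℤ) := by
          simpa using hdvd.sub hcq
        have := Int.le_of_dvd hl1 h1
        omega
      · intro hdvd
        have h1 : (c:ℤ) ∣ (l:ℤ) := by
          simpa using hcq.sub hdvd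
        have := Int.le_of_dvd hl1 h1
        omega
    rw [Finset.sum_congr rfl hz, Finset.sum_const_zero]
    have : π*((c*q+0:ℕ):ℝ)/c = (q:ℤ)*π := by push_cast; field_simp; ring
    rw [this, cot_int_mul_pi', mul_zero]
  · have hρin : ρ ∈ Ico 1 c := Finset.mem_Ico.2 ⟨hρ1, hrc⟩
    have hcρin : c - ρ ∈ Ico 1 c := Finset.mem_Ico.2 ⟨by omega, by omega⟩
    have hcond1 : ∀ l ∈ Ico 1 c, ((c:ℤ) ∣ ((c*q+ρ:ℕ):ℤ)-l) ↔ l = ρ := by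
      intro l hl
      rw [Finset.mem_Ico] at hl
      have hlc : (l:ℤ) < c := by exact_mod_cast hl.2
      have hl1 : (1:ℤ) ≤ l := by exact_mod_cast hl.1
      have hρc : (ρ:ℤ) < c := by exact_mod_cast hrc
      have hρ1' : (1:ℤ) ≤ ρ := by exact_mod_cast hρ1
      have hsplit : ((c*q+ρ:ℕ):ℤ) - l = ((ρ:ℤ) - l) + (c:ℤ)*q := by push_cast; ring
      constructor
      · intro hdvd
        rw [hsplit] at hdvd
        have h1 : (c:ℤ) ∣ ((ρ:ℤ) - l) := (dvd_add_left (dvd_mul_right (c:ℤ) (q:ℤ))).mp hdvd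
        have habs : |(ρ:ℤ) - l| < c := abs_lt.mpr ⟨by omega, by omega⟩
        have h0 : (ρ:ℤ) - l = 0 := Int.eq_zero_of_abs_lt_dvd h1 habs
        omega
      · rintro rfl
        rw [hsplit]
        exact dvd_add (by simp) (dvd_mul_right _ _)
    have hcond2 : ∀ l ∈ Ico 1 c, ((c:ℤ) ∣ ((c*q+ρ:ℕ):ℤ)+l) ↔ l = c - ρ := by
      intro l hl
      rw [Finset.mem_Ico] at hl
      have hlc : (l:ℤ) < c := by exact_mod_cast hl.2
      have hl1 : (1:ℤ) ≤ l := by exact_mod_cast hl.1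
      have hρc : (ρ:ℤ) < c := by exact_mod_cast hrc
      have hρ1' : (1:ℤ) ≤ ρ := by exact_mod_cast hρ1
      have hsplit : ((c*q+ρ:ℕ):ℤ) + l = ((ρ:ℤ) + l) + (c:ℤ)*q := by push_cast; ring
      constructor
      · intro hdvd
        rw [hsplit] at hdvd
        have h1 : (c:ℤ) ∣ ((ρ:ℤ) + l) := (dvd_add_left (dvd_mul_right (c:ℤ) (q:ℤ))).mp hdvd
        obtain ⟨t, ht⟩ := h1
        have hcZ : (0:ℤ) < c := by exact_mod_cast hc
        have ht1 : t = 1 := by nlinarith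
        rw [ht1, mul_one] at ht
        omega
      · rintro rfl
        rw [hsplit]
        apply dvd_add _ (dvd_mul_right _ _)
        rw [show (ρ:ℤ) + ((c - ρ : ℕ):ℤ) = c from by rw [Nat.cast_sub hrc.le]; ring]
    have hterm : ∀ l ∈ Ico 1 c, Real.cot (π*l/c) *
        (((if (c:ℤ) ∣ ((c*q+ρ:ℕ):ℤ)-l then (c:ℝ) else 0)
          - (if (c:ℤ) ∣ ((c*q+ρ:ℕ):ℤ)+l then (c:ℝ) else 0))/2)
        = (if l = ρ then Real.cot (π*l/c) * ((c:ℝ)/2) else 0)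
          - (if l = c - ρ then Real.cot (π*l/c) * ((c:ℝ)/2) else 0) := by
      intro l hl
      rw [if_congr (hcond1 l hl) rfl rfl, if_congr (hcond2 l hl) rfl rfl]
      rw [sub_div, mul_sub]
      congr 1 <;>
      · split <;> simp <;> ring
    rw [Finset.sum_congr rfl hterm, Finset.sum_sub_distrib,
        Finset.sum_ite_eq' (Ico 1 c) ρ (fun l => Real.cot (π*l/c) * ((c:ℝ)/2)),
        Finset.sum_ite_eq' (Ico 1 c) (c-ρ) (fun l => Real.cot (π*l/c) * ((c:ℝ)/2)),
        if_pos hρin, if_pos hcρin]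
    have hcot1 : Real.cot (π*((c-ρ:ℕ):ℝ)/c) = -Real.cot (π*ρ/c) := by
      rw [show π*((c-ρ:ℕ):ℝ)/c = π - π*ρ/c by
        rw [Nat.cast_sub hrc.le]; field_simp]
      exact cot_pi_sub' _
    have hcot2 : Real.cot (π*((c*q+ρ:ℕ):ℝ)/c) = Real.cot (π*ρ/c) := by
      rw [show π*((c*q+ρ:ℕ):ℝ)/c = π*ρ/c + (q:ℤ)*π by push_cast; field_simp; ring]
      exact cot_add_int_mul_pi' _ _
    rw [hcot1, hcot2]
    ring

lemma Bval_self (c ν : ℕ) (h1 : 1 ≤ ν) (h2 : ν < c) : Bval ν c = (ν:ℝ)/c - 1/2 := by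
  rw [Bval, if_neg (fun hd => by have := Nat.le_of_dvd (by omega) hd; omega),
    Nat.mod_eq_of_lt h2]

/-! ### The cotangent Dedekind sum as a sawtooth sum -/

lemma dedekind_eq_saw (a c : ℕ) (hc : 0 < c) :
    dedekindS a c = ∑ ν ∈ Ico 1 c, Bval (a*ν) c * ((ν:ℝ)/c - 1/2) := by
  have hc0 : (c:ℝ) ≠ 0 := Nat.cast_ne_zero.2 hc.ne'
  have horth : ∀ k l : ℕ, ∑ ν ∈ Ico 1 c, Real.sin (2*π*k*((a*ν:ℕ):ℝ)/c) * Real.sin (2*π*l*ν/c)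
      = ((if (c:ℤ) ∣ ((k*a:ℕ):ℤ)-l then (c:ℝ) else 0)
        - (if (c:ℤ) ∣ ((k*a:ℕ):ℤ)+l then (c:ℝ) else 0))/2 := by
    intro k l
    have h := sum_sin_sin c hc (k*a) l
    rw [Finset.range_eq_Ico, Finset.sum_eq_sum_Ico_succ_bot hc] at h
    norm_num at h
    have hcongr : ∀ ν ∈ Ico 1 c, Real.sin (2*π*k*((a*ν:ℕ):ℝ)/c) * Real.sin (2*π*l*ν/c)
        = Real.sin (2*π*((k*a:ℕ):ℝ)*ν/c) * Real.sin (2*π*l*ν/c) := by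
      intro ν _
      congr 2
      push_cast
      ring
    rw [Finset.sum_congr rfl hcongr]
    simp only [Nat.cast_mul]
    convert h using 2
  rw [show (∑ ν ∈ Ico 1 c, Bval (a*ν) c * ((ν:ℝ)/c - 1/2))
      = ∑ ν ∈ Ico 1 c, Bval (a*ν) c * Bval ν c from by
    apply Finset.sum_congr rfl
    intro ν hν
    rw [Finset.mem_Ico] at hν
    rw [Bval_self c ν hν.1 hν.2]]
  have hexp : ∀ ν ∈ Ico 1 c, Bval (a*ν) c * Bval ν c
      = (1/(4*(c:ℝ)^2)) * ∑ k ∈ Ico 1 c, ∑ l ∈ Ico 1 c,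
          (Real.cot (π*k/c) * Real.cot (π*l/c))
          * (Real.sin (2*π*k*((a*ν:ℕ):ℝ)/c) * Real.sin (2*π*l*ν/c)) := by
    intro ν _
    have hP := saw_fourier c hc (a*ν)
    have hQ := saw_fourier c hc ν
    set P := ∑ k ∈ Ico 1 c, Real.cot (π*k/c) * Real.sin (2*π*k*((a*ν:ℕ):ℝ)/c) with hPdef
    set Q := ∑ k ∈ Ico 1 c, Real.cot (π*k/c) * Real.sin (2*π*k*(ν:ℝ)/c) with hQdef
    have hPQ : P * Q = ∑ k ∈ Ico 1 c, ∑ l ∈ Ico 1 c,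
        (Real.cot (π*k/c) * Real.cot (π*l/c))
        * (Real.sin (2*π*k*((a*ν:ℕ):ℝ)/c) * Real.sin (2*π*l*ν/c)) := by
      rw [hPdef, hQdef, Finset.sum_mul_sum]
      apply Finset.sum_congr rfl
      intro k _
      apply Finset.sum_congr rfl
      intro l _
      ring
    rw [hP, hQ, ← hPQ]
    ring
  rw [Finset.sum_congr rfl hexp, ← Finset.mul_sum, Finset.sum_comm]
  have hswap2 : ∀ k ∈ Ico 1 c, (∑ ν ∈ Ico 1 c, ∑ l ∈ Ico 1 c,
        (Real.cot (π*k/c) * Real.cot (π*l/c))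
        * (Real.sin (2*π*k*((a*ν:ℕ):ℝ)/c) * Real.sin (2*π*l*ν/c)))
      = Real.cot (π*k/c) * ((c:ℝ) * Real.cot (π*((k*a:ℕ):ℝ)/c)) := by
    intro k _
    rw [Finset.sum_comm]
    have hl : ∀ l ∈ Ico 1 c, (∑ ν ∈ Ico 1 c,
        (Real.cot (π*k/c) * Real.cot (π*l/c))
        * (Real.sin (2*π*k*((a*ν:ℕ):ℝ)/c) * Real.sin (2*π*l*ν/c)))
        = Real.cot (π*k/c) * (Real.cot (π*l/c) *
          (((if (c:ℤ) ∣ ((k*a:ℕ):ℤ)-l then (c:ℝ) else 0)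
            - (if (c:ℤ) ∣ ((k*a:ℕ):ℤ)+l then (c:ℝ) else 0))/2)) := by
      intro l _
      rw [← Finset.mul_sum, horth k l]
      ring
    rw [Finset.sum_congr rfl hl, ← Finset.mul_sum, key_l c hc (k*a)]
  rw [Finset.sum_congr rfl hswap2]
  rw [dedekindS]
  rw [show (∑ k ∈ Ico 1 c, Real.cot (π*k/c) * ((c:ℝ) * Real.cot (π*((k*a:ℕ):ℝ)/c)))
      = (c:ℝ) * ∑ k ∈ Ico 1 c, Real.cot (π*((a:ℤ):ℝ)*k/c) * Real.cot (π*k/c) from by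
    rw [Finset.mul_sum]
    apply Finset.sum_congr rfl
    intro k _
    rw [show π*(((k*a:ℕ)):ℝ)/c = π*((a:ℤ):ℝ)*k/c from by push_cast; ring]
    ring]
  field_simp

/-! ### The algebraic evaluation of the sawtooth sum -/

lemma sum_Ico_cast (c : ℕ) : ∑ ν ∈ Ico 1 c, (ν:ℝ) = c*(c-1)/2 := by
  induction c with
  | zero => simp
  | succ c ih =>
    rcases Nat.eq_zero_or_pos c with rfl | hc
    · simp
    · rw [Finset.sum_Ico_succ_top hc, ih]
      push_cast
      ring

lemma sum_Ico_sq (c : ℕ) : ∑ ν ∈ Ico 1 c, (ν:ℝ)^2 = c*(c-1)*(2*c-1)/6 := by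
  induction c with
  | zero => simp
  | succ c ih =>
    rcases Nat.eq_zero_or_pos c with rfl | hc
    · simp
    · rw [Finset.sum_Ico_succ_top hc, ih]
      push_cast
      ring

lemma U_closed (a c : ℕ) (hc : 0 < c) (H : ∀ ν, 1 ≤ ν → ν < c → c ∣ a*ν → 2*ν = c) :
    ∑ ν ∈ Ico 1 c, Bval (a*ν) c * ((ν:ℝ)/c - 1/2)
      = (a:ℝ)*((c:ℝ)-1)*((c:ℝ)-2)/(12*c)
        + (1/(2*c)) * ∑ ν ∈ Ico 1 c, ((a*ν/c : ℕ):ℝ) * ((c:ℝ) - 2*ν) := by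
  have hc0 : (c:ℝ) ≠ 0 := Nat.cast_ne_zero.2 hc.ne'
  have hpt : ∀ ν ∈ Ico 1 c, Bval (a*ν) c * ((ν:ℝ)/c - 1/2)
      = ((a:ℝ)*ν/c - 1/2) * ((ν:ℝ)/c - 1/2)
        + ((a*ν/c : ℕ):ℝ) * ((c:ℝ) - 2*ν) * (1/(2*c)) := by
    intro ν hν
    rw [Finset.mem_Ico] at hν
    have hdm : ((a*ν % c : ℕ):ℝ) + (c:ℝ) * ((a*ν/c : ℕ):ℝ) = (a:ℝ)*ν := by
      have := Nat.mod_add_div (a*ν) c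
      have h2 : ((a*ν % c + c * (a*ν/c) : ℕ):ℝ) = ((a*ν : ℕ):ℝ) := by rw [this]
      push_cast at h2
      linarith [h2]
    by_cases hd : c ∣ a*ν
    · have h2ν : 2*ν = c := H ν hν.1 hν.2 hd
      have hν2 : (ν:ℝ)/c - 1/2 = 0 := by
        have hceq : (c:ℝ) = 2*ν := by exact_mod_cast h2ν.symm
        have hν0 : (ν:ℝ) ≠ 0 := by
          have : (0:ℝ) < (ν:ℝ) := by exact_mod_cast hν.1
          linarith
        rw [hceq]
        rw [show (ν:ℝ)/(2*ν) = 1/2 from by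
          rw [eq_div_iff (by norm_num : (2:ℝ) ≠ 0)]
          field_simp]
        ring
      rw [Bval, if_pos hd, hν2]
      rw [show ((c:ℝ) - 2*ν) = 0 from by
        have : (c:ℝ) = 2*ν := by exact_mod_cast h2ν.symm
        linarith]
      ring
    · rw [Bval, if_neg hd]
      have : ((a*ν % c : ℕ):ℝ) = (a:ℝ)*ν - (c:ℝ)*((a*ν/c : ℕ):ℝ) := by linarith [hdm]
      rw [this]
      field_simp
      ring
  rw [Finset.sum_congr rfl hpt, Finset.sum_add_distrib]
  have h1 : ∑ ν ∈ Ico 1 c, ((a*ν/c : ℕ):ℝ) * ((c:ℝ) - 2*ν) * (1/(2*c))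
      = (1/(2*c)) * ∑ ν ∈ Ico 1 c, ((a*ν/c : ℕ):ℝ) * ((c:ℝ) - 2*ν) := by
    rw [Finset.mul_sum]
    apply Finset.sum_congr rfl
    intro ν _
    ring
  have h2 : ∑ ν ∈ Ico 1 c, ((a:ℝ)*ν/c - 1/2) * ((ν:ℝ)/c - 1/2)
      = (a:ℝ)*((c:ℝ)-1)*((c:ℝ)-2)/(12*c) := by
    have hpt2 : ∀ ν ∈ Ico 1 c, ((a:ℝ)*ν/c - 1/2) * ((ν:ℝ)/c - 1/2)
        = ((a:ℝ)/(c:ℝ)^2) * (ν:ℝ)^2 - (((a:ℝ)+1)/(2*c)) * (ν:ℝ) + 1/4 := by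
      intro ν _
      field_simp
      ring
    rw [Finset.sum_congr rfl hpt2, Finset.sum_add_distrib, Finset.sum_sub_distrib,
        ← Finset.mul_sum, ← Finset.mul_sum, sum_Ico_cast, sum_Ico_sq, Finset.sum_const,
        Nat.card_Ico]
    have hcc : ((c - 1 : ℕ):ℝ) = (c:ℝ) - 1 := by
      rw [Nat.cast_sub hc]
      norm_num
    rw [nsmul_eq_mul, hcc]
    field_simp
    ring
  rw [h1, h2]

lemma dvd_bound (b ν t : ℕ) (hb : 0 < b) (h1 : 0 < ν) (h2 : ν < 2*b) (ht : ν = b * t) :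
    ν = b := by
  have h0 : t ≠ 0 := by rintro rfl; omega
  have h3 : t < 2 := by
    by_contra h
    have : b*2 ≤ b*t := Nat.mul_le_mul_left b (by omega)
    omega
  have ht1 : t = 1 := by omega
  subst ht1
  omega

/-! ### Main theorem -/

theorem bQ_eq_M (a b : ℕ) (ha : 0 < a) (hb : 0 < b) (hcop : Nat.gcd a b = 1)
    (hodd : Odd (a + b)) :
    (b : ℝ) * Qpart a b = (a : ℝ) * (1 - 3 * b) / 2 + (Mpart a b : ℝ) := by
  have hcop' : Nat.Coprime a b := hcop
  have hb2 : 0 < 2*b := by omega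
  have H3 : ∀ ν, 1 ≤ ν → ν < 2*b → (2*b) ∣ a*ν → 2*ν = 2*b := by
    intro ν h1 h2 hd
    rcases Nat.even_or_odd a with hae | hao
    · obtain ⟨a₀, ha0⟩ := hae
      have ha0' : a = 2*a₀ := by omega
      have hcop0 : Nat.Coprime a₀ b := Nat.Coprime.coprime_dvd_left ⟨2, by omega⟩ hcop'
      have hd' : b ∣ a₀ * ν := by
        have : 2*b ∣ 2*(a₀*ν) := by rw [show 2*(a₀*ν) = a*ν from by rw [ha0']; ring]; exact hd
        exact (Nat.mul_dvd_mul_iff_left (by omega : 0 < 2)).mp this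
      have hdν : b ∣ ν := Nat.Coprime.dvd_of_dvd_mul_left (hcop0.symm) hd'
      obtain ⟨t, ht⟩ := hdν
      have := dvd_bound b ν t hb (by omega) h2 ht
      omega
    · have hcop2 : Nat.Coprime a 2 :=
        Nat.Coprime.symm ((Nat.Prime.coprime_iff_not_dvd Nat.prime_two).mpr
          (by rw [Nat.odd_iff] at hao; omega))
      have hcop2b : Nat.Coprime a (2*b) := Nat.Coprime.mul_right hcop2 hcop'
      have hdν : 2*b ∣ ν := Nat.Coprime.dvd_of_dvd_mul_left (hcop2b.symm) hd
      have := Nat.le_of_dvd (by omega) hdν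
      omega
  have H2 : ∀ ν, 1 ≤ ν → ν < b → b ∣ (2*a)*ν → 2*ν = b := by
    intro ν h1 h2 hd
    have hd' : b ∣ 2*ν := Nat.Coprime.dvd_of_dvd_mul_left (hcop'.symm)
      (show b ∣ a*(2*ν) by rwa [show a*(2*ν) = 2*a*ν from by ring])
    obtain ⟨t, ht⟩ := hd'
    have := dvd_bound b (2*ν) t hb (by omega) (by omega) ht
    omega
  have H1 : ∀ ν, 1 ≤ ν → ν < b → b ∣ a*ν → 2*ν = b := by
    intro ν h1 h2 hd
    have hdν : b ∣ ν := Nat.Coprime.dvd_of_dvd_mul_left (hcop'.symm) hd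
    have := Nat.le_of_dvd (by omega) hdν
    omega
  have e1 := (dedekind_eq_saw a (2*b) hb2).trans (U_closed a (2*b) hb2 H3)
  have e2 := (dedekind_eq_saw (2*a) b hb).trans (U_closed (2*a) b hb H2)
  have e3 := (dedekind_eq_saw a b hb).trans (U_closed a b hb H1)
  set G : ℝ := ∑ ν ∈ Ico 1 (2*b), ((a*ν/(2*b) : ℕ):ℝ) * (((2*b : ℕ):ℝ) - 2*(ν:ℝ)) with hG
  set Hs : ℝ := ∑ ν ∈ Ico 1 b, (((2*a)*ν/b : ℕ):ℝ) * ((b:ℝ) - 2*ν) with hH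
  set F : ℝ := ∑ ν ∈ Ico 1 b, ((a*ν/b : ℕ):ℝ) * ((b:ℝ) - 2*ν) with hF
  have hcast : ((2*b:ℕ):ℝ) = 2*(b:ℝ) := by push_cast; ring
  have hG2 : G = 2 * ∑ ν ∈ Ico 1 (2*b), ((a*ν/(2*b) : ℕ):ℝ) * ((b:ℝ) - ν) := by
    rw [hG, Finset.mul_sum]
    apply Finset.sum_congr rfl
    intro ν _
    rw [hcast]
    ring
  have hHF : Hs - 2*F = ∑ ν ∈ Ico 1 b,
      ((((2*a)*ν/b : ℕ):ℝ) - 2*((a*ν/b : ℕ):ℝ)) * ((b:ℝ) - 2*ν) := by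
    rw [hH, hF, Finset.mul_sum, ← Finset.sum_sub_distrib]
    apply Finset.sum_congr rfl
    intro ν _
    ring
  have hM : (Mpart a b : ℝ) = (a:ℝ)*(b:ℝ)^2 + (3/2) * G + 3 * (Hs - 2*F) := by
    simp only [Mpart, Int.cast_add, Int.cast_mul, Int.cast_pow, Int.cast_sub, Int.cast_sum,
      Int.cast_natCast, Int.cast_ofNat]
    rw [hG2, hHF]
    ring
  have e2' : dedekindS (2*(a:ℤ)) b = ((2*a:ℕ):ℝ)*((b:ℝ)-1)*((b:ℝ)-2)/(12*b)
      + (1/(2*(b:ℝ))) * Hs := by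
    rw [show (2*(a:ℤ)) = ((2*a : ℕ):ℤ) from by push_cast; ring]
    exact e2
  have hcast2a : ((2*a:ℕ):ℝ) = 2*(a:ℝ) := by push_cast; ring
  rw [Qpart, e1, e2', e3, hM, hcast, hcast2a]
  have hb0 : (b:ℝ) ≠ 0 := Nat.cast_ne_zero.2 hb.ne'
  field_simp
  ring
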